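/- Let η > 1 be a real number and N₀ ≥ 1 an integer. There exists a constant C, depending only on η and N₀, such that for all families (A_q)_{q ≥ -1} and (B_q)_{q ≥ -1} of nonnegative real numbers, ( Σ_{j ≥ -1} ( Σ_{q ≥ max(j-N₀, -1)} A_q B_q )² )^{1/2} ≤ C ( Σ_{q ≥ -1} (2+q)^η A_q ) ( Σ_{q ≥ -1} B_q² )^{1/2}. -/

import Mathlib

open scoped ENNReal NNReal

theorem remainder_sequence_estimate (η : ℝ) (hη : 1 < η) (N₀ : ℕ) (hN₀ : 1 ≤ N₀) :
    ∃ C : ℝ≥0, 0 < C ∧ ∀ A B : ℤ → ℝ≥0,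
      (∑' j : ℤ, if -1 ≤ j then
          (∑' q : ℤ, if max (j - N₀) (-1) ≤ q then (A q : ℝ≥0∞) * (B q : ℝ≥0∞) else 0) ^ (2:ℕ)
        else 0) ^ (1/2 : ℝ)
      ≤ (C : ℝ≥0∞) *
          (∑' q : ℤ, if -1 ≤ q then (ENNReal.ofReal (2 + (q:ℝ))) ^ η * (A q : ℝ≥0∞) else 0) *
          (∑' q : ℤ, if -1 ≤ q then (B q : ℝ≥0∞) ^ (2:ℕ) else 0) ^ (1/2 : ℝ) := by
  set m : ℤ → ℤ := fun j => max (j - N₀) (-1) with hm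
  set w : ℤ → ℝ≥0∞ := fun j => (ENNReal.ofReal (2 + (m j : ℝ))) ^ (-η) with hw
  have hηpos : (0:ℝ) < η := lt_trans one_pos hη
  have h2m : ∀ j, (1:ℝ) ≤ 2 + (m j : ℝ) := by
    intro j
    have : (-1:ℤ) ≤ m j := le_max_right _ _
    have : (-1:ℝ) ≤ (m j : ℝ) := by exact_mod_cast this
    linarith
  -- K := sum of w over j ≥ -1 is finite
  set K : ℝ≥0∞ := ∑' j : ℤ, if -1 ≤ j then w j else 0 with hK
  have hKfin : K ≠ ∞ := by
    have hinj : Function.Injective (fun k : ℕ => (k : ℤ) - 1) := by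
      intro a b h; simpa using h
    have hsupp : Function.support (fun j : ℤ => if -1 ≤ j then w j else 0)
        ⊆ Set.range (fun k : ℕ => (k : ℤ) - 1) := by
      intro j hj
      by_cases h : -1 ≤ j
      · refine ⟨(j + 1).toNat, ?_⟩
        show ((j + 1).toNat : ℤ) - 1 = j
        omega
      · simp [h] at hj
    have heq := hinj.tsum_eq hsupp
    rw [hK, ← heq]
    have hterm : ∀ k : ℕ, (if -1 ≤ (k:ℤ) - 1 then w ((k:ℤ) - 1) else 0)
        ≤ ENNReal.ofReal (((N₀:ℝ) + 1) ^ η * ((k:ℝ) + 1) ^ (-η)) := by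
      intro k
      rw [if_pos (by omega)]
      have hx : (0:ℝ) < 2 + (m ((k:ℤ) - 1) : ℝ) := lt_of_lt_of_le one_pos (h2m _)
      have hlow : ((k:ℝ) + 1) / ((N₀:ℝ) + 1) ≤ 2 + (m ((k:ℤ) - 1) : ℝ) := by
        rw [div_le_iff₀ (by positivity)]
        have hNR : (1:ℝ) ≤ (N₀:ℝ) := by exact_mod_cast hN₀
        rcases le_or_gt (N₀ : ℤ) (k : ℤ) with h | h
        · have hmv : m ((k:ℤ) - 1) = (k:ℤ) - 1 - N₀ := by
            simp only [hm]; omega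
          rw [hmv]
          push_cast
          have hcast : (N₀:ℝ) ≤ (k:ℝ) := by exact_mod_cast h
          nlinarith
        · have hmv : m ((k:ℤ) - 1) = -1 := by simp only [hm]; omega
          rw [hmv]
          have : (k:ℝ) ≤ (N₀:ℝ) := by exact_mod_cast le_of_lt h
          push_cast
          nlinarith
      have hposdiv : (0:ℝ) < ((k:ℝ) + 1) / ((N₀:ℝ) + 1) := by positivity
      calc w ((k:ℤ) - 1) = ENNReal.ofReal ((2 + (m ((k:ℤ) - 1) : ℝ)) ^ (-η)) := by
            simp only [hw]; exact ENNReal.ofReal_rpow_of_pos hx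
        _ ≤ ENNReal.ofReal ((((k:ℝ) + 1) / ((N₀:ℝ) + 1)) ^ (-η)) := by
            apply ENNReal.ofReal_le_ofReal
            exact Real.rpow_le_rpow_of_nonpos hposdiv hlow (by linarith)
        _ = ENNReal.ofReal (((N₀:ℝ) + 1) ^ η * ((k:ℝ) + 1) ^ (-η)) := by
            congr 1
            rw [Real.div_rpow (by positivity) (by positivity),
              Real.rpow_neg (by positivity), Real.rpow_neg (by positivity)]
            field_simp
    have hsummable : Summable (fun k : ℕ => ((N₀:ℝ) + 1) ^ η * ((k:ℝ) + 1) ^ (-η)) := by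
      apply Summable.mul_left
      have h1 : Summable (fun n : ℕ => ((n:ℝ)) ^ (-η)) :=
        Real.summable_nat_rpow.mpr (by linarith)
      have h2 := (summable_nat_add_iff 1).mpr h1
      convert h2 using 2 with k
      push_cast
      · rfl
      · push_cast; rfl
    refine ne_top_of_le_ne_top (ENNReal.ofReal_ne_top (r := ∑' k : ℕ, ((N₀:ℝ) + 1) ^ η * ((k:ℝ) + 1) ^ (-η))) ?_
    calc (∑' k : ℕ, if -1 ≤ (k:ℤ) - 1 then w ((k:ℤ) - 1) else 0)
        ≤ ∑' k : ℕ, ENNReal.ofReal (((N₀:ℝ) + 1) ^ η * ((k:ℝ) + 1) ^ (-η)) :=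
          ENNReal.tsum_le_tsum hterm
      _ = ENNReal.ofReal (∑' k : ℕ, ((N₀:ℝ) + 1) ^ η * ((k:ℝ) + 1) ^ (-η)) :=
          (ENNReal.ofReal_tsum_of_nonneg (fun k => by positivity) hsummable).symm
  -- define C
  refine ⟨(K ^ (1/2:ℝ)).toNNReal + 1, by positivity, fun A B => ?_⟩
  set T : ℝ≥0∞ := ∑' q : ℤ, if -1 ≤ q then (ENNReal.ofReal (2 + (q:ℝ))) ^ η * (A q : ℝ≥0∞) else 0 with hT
  set U2 : ℝ≥0∞ := ∑' q : ℤ, if -1 ≤ q then (B q : ℝ≥0∞) ^ (2:ℕ) else 0 with hU2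
  set U : ℝ≥0∞ := U2 ^ (1/2 : ℝ) with hU
  have hBle : ∀ q : ℤ, -1 ≤ q → (B q : ℝ≥0∞) ≤ U := by
    intro q hq
    have h1 : (B q : ℝ≥0∞) ^ (2:ℕ) ≤ U2 := by
      rw [hU2]
      have := ENNReal.le_tsum (f := fun q : ℤ => if -1 ≤ q then (B q : ℝ≥0∞) ^ (2:ℕ) else 0) q
      rwa [if_pos hq] at this
    have h2 : ((B q : ℝ≥0∞) ^ (2:ℕ)) ^ (1/2:ℝ) ≤ U := ENNReal.rpow_le_rpow h1 (by norm_num)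
    rwa [← ENNReal.rpow_natCast, ← ENNReal.rpow_mul, show ((2:ℕ):ℝ) * (1/2:ℝ) = 1 by norm_num,
      ENNReal.rpow_one] at h2
  -- key per-j bound
  have hSj : ∀ j : ℤ,
      (∑' q : ℤ, if m j ≤ q then (A q : ℝ≥0∞) * (B q : ℝ≥0∞) else 0) ≤ w j * T * U := by
    intro j
    have hterm : ∀ q : ℤ, (if m j ≤ q then (A q : ℝ≥0∞) * (B q : ℝ≥0∞) else 0)
        ≤ w j * ((if -1 ≤ q then (ENNReal.ofReal (2 + (q:ℝ))) ^ η * (A q : ℝ≥0∞) else 0) * U) := by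
      intro q
      by_cases h : m j ≤ q
      · rw [if_pos h, if_pos (le_trans (le_max_right _ _) h)]
        have hq1 : (1:ℝ) ≤ 2 + (q:ℝ) := by
          have : (m j : ℝ) ≤ (q:ℝ) := by exact_mod_cast h
          linarith [h2m j]
        have hfac : (1:ℝ≥0∞) ≤ w j * (ENNReal.ofReal (2 + (q:ℝ))) ^ η := by
          simp only [hw]
          rw [ENNReal.rpow_neg]
          have hmono : (ENNReal.ofReal (2 + (m j : ℝ))) ^ η ≤ (ENNReal.ofReal (2 + (q:ℝ))) ^ η := by
            apply ENNReal.rpow_le_rpow _ (le_of_lt hηpos)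
            apply ENNReal.ofReal_le_ofReal
            have : (m j : ℝ) ≤ (q:ℝ) := by exact_mod_cast h
            linarith
          have hne0 : (ENNReal.ofReal (2 + (m j : ℝ))) ^ η ≠ 0 := by
            apply ne_of_gt
            apply ENNReal.rpow_pos
            · exact ENNReal.ofReal_pos.mpr (lt_of_lt_of_le one_pos (h2m j))
            · exact ENNReal.ofReal_ne_top
          have hnetop : (ENNReal.ofReal (2 + (m j : ℝ))) ^ η ≠ ∞ :=
            ENNReal.rpow_ne_top_of_nonneg (le_of_lt hηpos) ENNReal.ofReal_ne_top
          calc (1:ℝ≥0∞) = ((ENNReal.ofReal (2 + (m j : ℝ))) ^ η)⁻¹ *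
                (ENNReal.ofReal (2 + (m j : ℝ))) ^ η := (ENNReal.inv_mul_cancel hne0 hnetop).symm
            _ ≤ _ := mul_le_mul_right hmono _
        calc (A q : ℝ≥0∞) * (B q : ℝ≥0∞)
            ≤ (w j * (ENNReal.ofReal (2 + (q:ℝ))) ^ η) * ((A q : ℝ≥0∞) * U) := by
              have := mul_le_mul (hfac) (mul_le_mul_right (hBle q (le_trans (le_max_right _ _) h)) (A q : ℝ≥0∞)) zero_le zero_le
              simpa using this
          _ = w j * ((ENNReal.ofReal (2 + (q:ℝ))) ^ η * (A q : ℝ≥0∞) * U) := by ring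
      · rw [if_neg h]; exact zero_le
    calc (∑' q : ℤ, if m j ≤ q then (A q : ℝ≥0∞) * (B q : ℝ≥0∞) else 0)
        ≤ ∑' q : ℤ, w j * ((if -1 ≤ q then (ENNReal.ofReal (2 + (q:ℝ))) ^ η * (A q : ℝ≥0∞) else 0) * U) :=
          ENNReal.tsum_le_tsum hterm
      _ = w j * T * U := by
          rw [ENNReal.tsum_mul_left, ENNReal.tsum_mul_right, ← hT, mul_assoc]
  -- combine
  have hmain : (∑' j : ℤ, if -1 ≤ j then
      (∑' q : ℤ, if max (j - N₀) (-1) ≤ q then (A q : ℝ≥0∞) * (B q : ℝ≥0∞) else 0) ^ (2:ℕ)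
      else 0) ≤ K * (T * U) ^ (2:ℕ) := by
    calc (∑' j : ℤ, if -1 ≤ j then
        (∑' q : ℤ, if max (j - N₀) (-1) ≤ q then (A q : ℝ≥0∞) * (B q : ℝ≥0∞) else 0) ^ (2:ℕ)
        else 0)
        ≤ ∑' j : ℤ, (if -1 ≤ j then w j else 0) * (T * U) ^ (2:ℕ) := by
          apply ENNReal.tsum_le_tsum
          intro j
          by_cases h : -1 ≤ j
          · rw [if_pos h, if_pos h]
            have h1 := hSj j
            calc (∑' q : ℤ, if max (j - N₀) (-1) ≤ q then (A q : ℝ≥0∞) * (B q : ℝ≥0∞) else 0) ^ (2:ℕ)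
                ≤ (w j * T * U) ^ (2:ℕ) := pow_le_pow_left' h1 2
              _ = w j ^ (2:ℕ) * (T * U) ^ (2:ℕ) := by ring
              _ ≤ w j * (T * U) ^ (2:ℕ) := by
                  apply mul_le_mul_left
                  have hwle1 : w j ≤ 1 := by
                    simp only [hw]
                    exact ENNReal.rpow_le_one_of_one_le_of_neg
                      (ENNReal.one_le_ofReal.mpr (h2m j)) (by linarith)
                  calc w j ^ (2:ℕ) = w j * w j := sq (w j)
                    _ ≤ 1 * w j := mul_le_mul_left hwle1 _
                    _ = w j := one_mul _
          · rw [if_neg h, if_neg h, zero_mul]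
      _ = K * (T * U) ^ (2:ℕ) := ENNReal.tsum_mul_right
  calc (∑' j : ℤ, if -1 ≤ j then
      (∑' q : ℤ, if max (j - N₀) (-1) ≤ q then (A q : ℝ≥0∞) * (B q : ℝ≥0∞) else 0) ^ (2:ℕ)
      else 0) ^ (1/2:ℝ)
      ≤ (K * (T * U) ^ (2:ℕ)) ^ (1/2:ℝ) := ENNReal.rpow_le_rpow hmain (by norm_num)
    _ = K ^ (1/2:ℝ) * (T * U) := by
        rw [ENNReal.mul_rpow_of_nonneg _ _ (by norm_num : (0:ℝ) ≤ 1/2),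
          ← ENNReal.rpow_natCast (T * U), ← ENNReal.rpow_mul,
          show ((2:ℕ):ℝ) * (1/2:ℝ) = 1 by norm_num, ENNReal.rpow_one]
    _ ≤ (((K ^ (1/2:ℝ)).toNNReal + 1 : ℝ≥0) : ℝ≥0∞) * (T * U) := by
        apply mul_le_mul_left
        have : K ^ (1/2:ℝ) ≠ ∞ := ENNReal.rpow_ne_top_of_nonneg (by norm_num) hKfin
        rw [ENNReal.coe_add]
        calc K ^ (1/2:ℝ) = ((K ^ (1/2:ℝ)).toNNReal : ℝ≥0∞) := (ENNReal.coe_toNNReal this).symm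
          _ ≤ _ := le_add_of_le_of_nonneg le_rfl zero_le
    _ = _ := by rw [mul_assoc]
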